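/- A hypergraph G is α-acyclic if and only if it does not contain a simple cycle. -/

import Mathlib

open Finset

namespace BPO

variable {N : Type*} [DecidableEq N]

/-- Coordinate index set of `ℝ^{V ∪ E}`: one coordinate for each edge, and one
coordinate (labelled by the corresponding singleton) for each node. -/
def coords (V : Finset N) (E : Finset (Finset N)) : Finset (Finset N) :=
  E ∪ V.image fun v => {v}

/-- A point of `ℝ^{V ∪ E}`. -/
abbrev Pt (V : Finset N) (E : Finset (Finset N)) : Type _ :=
  {p : Finset N // p ∈ coords V E} → ℝ

/-- Evaluate a coordinate of a point, with the convention `z_∅ = 1`.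
For a node `v`, the coordinate `z_v` is `ev z {v}`. -/
noncomputable def ev {V : Finset N} {E : Finset (Finset N)} (z : Pt V E)
    (p : Finset N) : ℝ :=
  if h : p ∈ coords V E then z ⟨p, h⟩ else if p = ∅ then 1 else 0

/-- The multilinear set `S(G)`: binary points with `z_e = ∏_{v ∈ e} z_v`. -/
def mlSet (V : Finset N) (E : Finset (Finset N)) : Set (Pt V E) :=
  { z | (∀ p, z p = 0 ∨ z p = 1) ∧ ∀ e ∈ E, ev z e = ∏ v ∈ e, ev z {v} }

/-- The multilinear polytope `MP(G)`. -/
noncomputable def MP (V : Finset N) (E : Finset (Finset N)) : Set (Pt V E) :=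
  convexHull ℝ (mlSet V E)

/-- The completion `cl(E) = { f ⊆ e : |f| ≥ 2, e ∈ E }`. -/
def clE (E : Finset (Finset N)) : Finset (Finset N) :=
  (E.biUnion Finset.powerset).filter fun g => 2 ≤ g.card

/-- The set of maximal edges of `E`. -/
def maxEdges (E : Finset (Finset N)) : Finset (Finset N) :=
  E.filter fun e => ∀ e' ∈ E, e ⊆ e' → e = e'

/-- The linear function `ψ(U, e)`. -/
noncomputable def psi {V : Finset N} {E : Finset (Finset N)} (z : Pt V E)
    (U e : Finset N) : ℝ :=
  ∑ W ∈ U.powerset, (if Even W.card then (1 : ℝ) else -1) * ev z ((e \ U) ∪ W)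

/-- The complete edge relaxation constraints (`ψ(U,e) ≥ 0` for `U ⊆ e`, `e` a
maximal edge of `E`), imposed on the coordinate space `ℝ^{V ∪ F}`. -/
noncomputable def cerSet (V : Finset N) (E F : Finset (Finset N)) : Set (Pt V F) :=
  { z | ∀ e ∈ maxEdges E, ∀ U ⊆ e, 0 ≤ psi z U e }

/-- The complete edge relaxation `CER(G) ⊆ ℝ^{V ∪ cl(E)}`. -/
noncomputable def CER (V : Finset N) (E : Finset (Finset N)) : Set (Pt V (clE E)) :=
  cerSet V E (clE E)

/-- Projection onto the coordinates of `ℝ^{V₂ ∪ E₂}`. -/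
noncomputable def res (V₂ : Finset N) (E₂ : Finset (Finset N)) {V₁ : Finset N}
    {E₁ : Finset (Finset N)} (z : Pt V₁ E₁) : Pt V₂ E₂ :=
  fun p => ev z p.1

/-- `CER(G)` is an extension of `MP(G)`: `MP(G)` is the image of `CER(G)` under
the projection of `ℝ^{V ∪ cl(E)}` onto `ℝ^{V ∪ E}`. -/
def IsExtension (V : Finset N) (E : Finset (Finset N)) : Prop :=
  MP V E = (fun z : Pt V (clE E) => res V E z) '' CER V E

/-- The running intersection property for the family `E`. -/
def RunningIntersection (E : Finset (Finset N)) : Prop :=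
  ∃ L : List (Finset N), L.Nodup ∧ L.toFinset = E ∧
    ∀ k, 0 < k → k < L.length →
      ∃ j < k, L.getD k ∅ ∩ (L.take k).foldr (· ∪ ·) ∅ ⊆ L.getD j ∅

/-- A hypergraph is α-acyclic if its edge set has the running intersection property. -/
def AlphaAcyclic (E : Finset (Finset N)) : Prop := RunningIntersection E

/-- `s_i = e_i ∩ e_{i+1}` for a cyclic sequence `e_1, …, e_ℓ, e_{ℓ+1} = e_1`. -/
def cycS (c : ℕ → Finset N) (ℓ i : ℕ) : Finset N :=
  c i ∩ c (if i = ℓ then 1 else i + 1)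

/-- A simple cycle `e_1, …, e_ℓ, e_{ℓ+1} = e_1` of length `ℓ`. -/
def IsSimpleCycle (E : Finset (Finset N)) (ℓ : ℕ) (c : ℕ → Finset N) : Prop :=
  3 ≤ ℓ ∧ (∀ i, 1 ≤ i → i ≤ ℓ → c i ∈ E) ∧
    ∀ i j k, 1 ≤ i → i < j → j < k → k ≤ ℓ → ∀ e ∈ E,
      ((cycS c ℓ i ∪ cycS c ℓ j ∪ cycS c ℓ k) \ e).Nonempty

/-- An α-cycle `e_1, …, e_ℓ, e_{ℓ+1} = e_1` of length `ℓ`. -/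
def IsAlphaCycle (E : Finset (Finset N)) (ℓ : ℕ) (c : ℕ → Finset N) : Prop :=
  3 ≤ ℓ ∧ (∀ i, 1 ≤ i → i ≤ ℓ → c i ∈ E) ∧
    (∀ i j, 1 ≤ i → i ≤ ℓ → 1 ≤ j → j ≤ ℓ → i ≠ j → (c i \ c j).Nonempty) ∧
    ∀ i, 1 ≤ i → i ≤ ℓ → ∀ e ∈ E,
      ((cycS c ℓ (if i = 1 then ℓ else i - 1) ∪ cycS c ℓ i ∪
        cycS c ℓ (if i = ℓ then 1 else i + 1)) \ e).Nonempty

/-- A chordless α-cycle: no subsequence `e_i, …, e_j, ẽ, e_i` is an α-cycle. -/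
def Chordless (E : Finset (Finset N)) (ℓ : ℕ) (c : ℕ → Finset N) : Prop :=
  ∀ i j, 1 ≤ i → i < j → j ≤ ℓ → j - i ≤ ℓ - 3 →
    ∀ g ∈ E, (∀ k, i ≤ k → k ≤ j → g ≠ c k) →
      ¬ IsAlphaCycle E (j - i + 2) fun k => if k ≤ j - i + 1 then c (i + k - 1) else g

/-- The edge set `E_{V'}` of the subhypergraph induced by `W`. -/
def indE (E : Finset (Finset N)) (W : Finset N) : Finset (Finset N) :=
  (E.image fun e => e ∩ W).filter fun g => 2 ≤ g.card

/-- The edge set `E_{w→u}` obtained by contracting `w` to `u`. -/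
def contrE (E : Finset (Finset N)) (u w : N) : Finset (Finset N) :=
  E.filter (fun e => w ∉ e) ∪
    (E.filter fun e => w ∈ e ∧ e ≠ {u, w}).image fun e => e.erase w ∪ {u}

/-- The edge set `E'` obtained by expanding `w` to `f`. -/
def expE (E : Finset (Finset N)) (w : N) (f : Finset N) : Finset (Finset N) :=
  insert f
    (E.filter (fun e => w ∉ e) ∪ (E.filter fun e => w ∈ e).image fun e => e.erase w ∪ f)

/-- The coordinate renaming `x_w → z_f`, `x_v → z_v`, `x_e → z_e` (`w ∉ e`),
`x_e → z_{(e∖{w}) ⊎ f}` (`w ∈ e`) used in the expansion operation. -/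
def expRen (w : N) (f : Finset N) (p : Finset N) : Finset N :=
  if p = {w} then f else if w ∈ p then p.erase w ∪ f else p

namespace SC

/-- Union of a finite family of finsets. -/
def U (E : Finset (Finset N)) : Finset N := E.sup id

lemma mem_U {E : Finset (Finset N)} {x : N} : x ∈ U E ↔ ∃ f ∈ E, x ∈ f := by
  simp [U, Finset.mem_sup]

lemma mem_foldr_union {L : List (Finset N)} {x : N} :
    x ∈ L.foldr (· ∪ ·) ∅ ↔ ∃ f ∈ L, x ∈ f := by
  induction L with
  | nil => simp
  | cons a L ih => simp [ih]

/-- Inductive characterization of the running intersection property. -/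
inductive RIPd : Finset (Finset N) → Prop
  | nil : RIPd ∅
  | ins {F : Finset (Finset N)} {e : Finset N} (hF : RIPd F) (he : e ∉ F)
      (hw : F = ∅ ∨ ∃ g ∈ F, ∀ x ∈ e, x ∈ U F → x ∈ g) : RIPd (insert e F)

lemma ripd_of_ri {E : Finset (Finset N)} (h : RunningIntersection E) : RIPd E := by
  obtain ⟨L, hnd, hfin, hcond⟩ := h
  induction L using List.reverseRecOn generalizing E with
  | nil => simp only [List.toFinset_nil] at hfin; exact hfin ▸ RIPd.nil
  | append_singleton L' e ih =>
    have hnd' : L'.Nodup := (List.nodup_append.mp hnd).1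
    have he : e ∉ L' := by
      have := (List.nodup_append'.mp hnd).2.2
      intro hmem
      exact this hmem (by simp)
    have hfin' : (L' ++ [e]).toFinset = L'.toFinset ∪ {e} := by
      simp [List.toFinset_append]
    have hE : E = insert e L'.toFinset := by
      rw [← hfin, hfin']; ext x; simp [or_comm]
    subst hE
    have hcond' : ∀ k, 0 < k → k < L'.length →
        ∃ j < k, L'.getD k ∅ ∩ (L'.take k).foldr (· ∪ ·) ∅ ⊆ L'.getD j ∅ := by
      intro k hk hk'
      obtain ⟨j, hj, hsub⟩ := hcond k hk (by simp; omega)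
      refine ⟨j, hj, ?_⟩
      rwa [List.getD_append _ _ _ _ hk', List.take_append_of_le_length (le_of_lt hk'),
        List.getD_append _ _ _ _ (lt_trans hj hk')] at hsub
    have hFr : RIPd L'.toFinset := ih hnd' rfl hcond'
    refine RIPd.ins hFr (by simpa using he) ?_
    rcases eq_or_ne L'.toFinset ∅ with h0 | h0
    · exact Or.inl h0
    · -- use condition at k = L'.length
      have hL'len : 0 < L'.length := by
        rcases L' with _ | ⟨a, L''⟩
        · simp at h0
        · simp
      obtain ⟨j, hj, hsub⟩ := hcond L'.length hL'len (by simp)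
      have hgetk : (L' ++ [e]).getD L'.length ∅ = e := by
        rw [List.getD_append_right _ _ _ _ le_rfl]; simp
      have htake : (L' ++ [e]).take L'.length = L' := by
        rw [List.take_append_of_le_length le_rfl, List.take_length]
      rw [hgetk, htake] at hsub
      have hgj : (L' ++ [e]).getD j ∅ = L'.getD j ∅ :=
        List.getD_append _ _ _ _ hj
      rw [hgj] at hsub
      refine Or.inr ⟨L'.getD j ∅, ?_, ?_⟩
      · rw [List.mem_toFinset, List.getD_eq_getElem _ _ hj]; exact List.getElem_mem hj
      · intro x hx hxU
        apply hsub
        rw [Finset.mem_inter]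
        refine ⟨hx, ?_⟩
        rw [mem_foldr_union]
        rw [mem_U] at hxU
        obtain ⟨f, hf, hxf⟩ := hxU
        exact ⟨f, List.mem_toFinset.mp hf, hxf⟩

lemma ri_of_ripd {E : Finset (Finset N)} (h : RIPd E) : RunningIntersection E := by
  induction h with
  | nil => exact ⟨[], by simp, by simp, by simp⟩
  | @ins F e hF he hw ih =>
    obtain ⟨L', hnd, hfin, hcond⟩ := ih
    refine ⟨L' ++ [e], ?_, ?_, ?_⟩
    · rw [List.nodup_append']
      exact ⟨hnd, List.nodup_singleton e, by
        intro a ha ha'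
        simp only [List.mem_singleton] at ha'
        subst ha'
        exact he (hfin ▸ List.mem_toFinset.mpr ha)⟩
    · rw [List.toFinset_append, hfin]; ext x; simp [or_comm]
    · intro k hk hklen
      simp only [List.length_append, List.length_singleton] at hklen
      rcases lt_or_ge k L'.length with hlt | hge
      · obtain ⟨j, hj, hsub⟩ := hcond k hk hlt
        refine ⟨j, hj, ?_⟩
        rwa [List.getD_append _ _ _ _ hlt, List.take_append_of_le_length (le_of_lt hlt),
          List.getD_append _ _ _ _ (lt_trans hj hlt)]
      · have hkeq : k = L'.length := by omega
        subst hkeq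
        have hgetk : (L' ++ [e]).getD L'.length ∅ = e := by
          rw [List.getD_append_right _ _ _ _ le_rfl]; simp
        have htake : (L' ++ [e]).take L'.length = L' := by
          rw [List.take_append_of_le_length le_rfl, List.take_length]
        rcases hw with h0 | ⟨g, hg, hgsub⟩
        · -- F = ∅, so L' = [] and k = 0, contradiction with 0 < k
          have : L' = [] := by
            rcases L' with _ | ⟨a, L''⟩
            · rfl
            · exfalso
              have : a ∈ F := hfin ▸ List.mem_toFinset.mpr (by simp)
              rw [h0] at this; simp at this
          rw [this] at hk; simp at hk
        · have hgL : g ∈ L' := List.mem_toFinset.mp (hfin ▸ hg)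
          obtain ⟨j, hjlen, hjget⟩ := List.mem_iff_getElem.mp hgL
          refine ⟨j, hjlen, ?_⟩
          rw [hgetk, htake, List.getD_append _ _ _ _ hjlen,
            List.getD_eq_getElem _ _ hjlen, hjget]
          intro x hx
          rw [Finset.mem_inter, mem_foldr_union] at hx
          obtain ⟨hxe, f, hf, hxf⟩ := hx
          exact hgsub x hxe (mem_U.mpr ⟨f, hfin ▸ List.mem_toFinset.mpr hf, hxf⟩)

lemma ripd_iff_ri {E : Finset (Finset N)} : RIPd E ↔ RunningIntersection E :=
  ⟨ri_of_ripd, ripd_of_ri⟩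

/-- successor index in a cyclic sequence of length `ℓ` -/
def nxt (ℓ i : ℕ) : ℕ := if i = ℓ then 1 else i + 1

lemma cycS_eq (c : ℕ → Finset N) (ℓ i : ℕ) : cycS c ℓ i = c i ∩ c (nxt ℓ i) := rfl

lemma nxt_ge {ℓ i : ℕ} : 1 ≤ nxt ℓ i ↔ (i = ℓ ∨ 1 ≤ i + 1) := by unfold nxt; split <;> simp_all

lemma nxt_bounds {ℓ i : ℕ} (h1 : 1 ≤ i) (h2 : i ≤ ℓ) : 1 ≤ nxt ℓ i ∧ nxt ℓ i ≤ ℓ := by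
  unfold nxt; split <;> omega

/-- In a simple cycle, cyclically adjacent edges are distinct. -/
lemma adj_ne {E : Finset (Finset N)} {ℓ : ℕ} {c : ℕ → Finset N}
    (hC : IsSimpleCycle E ℓ c) {i : ℕ} (h1 : 1 ≤ i) (h2 : i ≤ ℓ) :
    c i ≠ c (nxt ℓ i) := by
  intro heq
  obtain ⟨hl3, hmem, hS⟩ := hC
  set p := if i = 1 then ℓ else i - 1 with hp
  have hnp : nxt ℓ p = i := by
    rcases eq_or_ne i 1 with h | h <;> unfold nxt <;> simp only [hp, h, if_true, if_false] <;>
      split <;> omega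
  have key : ∀ t, (t = p ∨ t = i ∨ t = nxt ℓ i) → cycS c ℓ t ⊆ c i := by
    rintro t (rfl | rfl | rfl)
    · rw [cycS_eq, hnp]; exact Finset.inter_subset_right
    · rw [cycS_eq]; exact Finset.inter_subset_left
    · rw [cycS_eq, ← heq]; exact Finset.inter_subset_left
  have main : ∀ i₁ i₂ i₃, 1 ≤ i₁ → i₁ < i₂ → i₂ < i₃ → i₃ ≤ ℓ →
      (i₁ = p ∨ i₁ = i ∨ i₁ = nxt ℓ i) → (i₂ = p ∨ i₂ = i ∨ i₂ = nxt ℓ i) →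
      (i₃ = p ∨ i₃ = i ∨ i₃ = nxt ℓ i) → False := by
    intro i₁ i₂ i₃ u1 u2 u3 u4 m1 m2 m3
    obtain ⟨x, hx⟩ := hS i₁ i₂ i₃ u1 u2 u3 u4 (c i) (hmem i h1 h2)
    rw [Finset.mem_sdiff, Finset.mem_union, Finset.mem_union] at hx
    rcases hx with ⟨(hx' | hx') | hx', hxn⟩
    · exact hxn (key i₁ m1 hx')
    · exact hxn (key i₂ m2 hx')
    · exact hxn (key i₃ m3 hx')
  rcases eq_or_ne i 1 with h | h
  · -- triple (1, 2, ℓ); p = ℓ, nxt = 2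
    have hpv : p = ℓ := by rw [hp, if_pos h]
    have hnv : nxt ℓ i = 2 := by unfold nxt; rw [h]; split <;> omega
    exact main 1 2 ℓ (by omega) (by omega) (by omega) le_rfl
      (by omega) (by omega) (by omega)
  · rcases eq_or_ne i ℓ with h' | h'
    · -- triple (1, ℓ-1, ℓ); p = ℓ-1, nxt = 1
      have hpv : p = ℓ - 1 := by rw [hp, if_neg h]; omega
      have hnv : nxt ℓ i = 1 := by unfold nxt; rw [if_pos h']
      exact main 1 (ℓ - 1) ℓ (by omega) (by omega) (by omega) le_rfl
        (by omega) (by omega) (by omega)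
    · have hpv : p = i - 1 := by rw [hp, if_neg h]
      have hnv : nxt ℓ i = i + 1 := by unfold nxt; rw [if_neg h']
      exact main (i - 1) i (i + 1) (by omega) (by omega) (by omega) (by omega)
        (by omega) (by omega) (by omega)

lemma no_cycle_of_ripd {E : Finset (Finset N)} (h : RIPd E) :
    ¬ ∃ ℓ c, IsSimpleCycle E ℓ c := by
  induction h with
  | nil =>
    rintro ⟨ℓ, c, h3, hmem, -⟩
    exact absurd (hmem 1 le_rfl (by omega)) (by simp)
  | @ins F e hF he hw ih =>
    rintro ⟨ℓ, c, hC⟩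
    obtain ⟨h3, hmem, hS⟩ := hC
    by_cases hcase : ∀ i, 1 ≤ i → i ≤ ℓ → c i ≠ e
    · exact ih ⟨ℓ, c, h3,
        fun i h1 h2 => (Finset.mem_insert.mp (hmem i h1 h2)).resolve_left (hcase i h1 h2),
        fun i j k h1 h2 h3' h4 f hf => hS i j k h1 h2 h3' h4 f (Finset.mem_insert_of_mem hf)⟩
    · push_neg at hcase
      obtain ⟨i₀, hi1, hi2, hie⟩ := hcase
      have hadj : ∀ t, 1 ≤ t → t ≤ ℓ → c t ≠ c (nxt ℓ t) :=
        fun t u1 u2 => adj_ne ⟨h3, hmem, hS⟩ u1 u2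
      rcases hw with h0 | ⟨g, hg, hgsub⟩
      · have hn := nxt_bounds hi1 hi2
        have hmm : c (nxt ℓ i₀) ∈ insert e F := hmem _ hn.1 hn.2
        rw [h0, Finset.mem_insert] at hmm
        rcases hmm with hmm | hmm
        swap; · simp at hmm
        exact hadj i₀ hi1 hi2 (hie.trans hmm.symm)
      · set c' := fun i => if c i = e then g else c i with hc'
        have hmem' : ∀ t, 1 ≤ t → t ≤ ℓ → c' t ∈ F := by
          intro t u1 u2
          simp only [hc']
          split
          · exact hg
          · exact (Finset.mem_insert.mp (hmem t u1 u2)).resolve_left (by assumption)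
        have hsub : ∀ t, 1 ≤ t → t ≤ ℓ → cycS c ℓ t ⊆ cycS c' ℓ t := by
          intro t u1 u2
          have hn := nxt_bounds u1 u2
          rw [cycS_eq, cycS_eq]
          simp only [hc']
          rcases eq_or_ne (c t) e with hte | hte
          · have hnne : c (nxt ℓ t) ≠ e := fun hh => hadj t u1 u2 (hte.trans hh.symm)
            rw [if_pos hte, if_neg hnne]
            intro x hx
            rw [Finset.mem_inter] at hx ⊢
            refine ⟨?_, hx.2⟩
            refine hgsub x (hte ▸ hx.1) (mem_U.mpr ⟨c (nxt ℓ t), ?_, hx.2⟩)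
            exact (Finset.mem_insert.mp (hmem _ hn.1 hn.2)).resolve_left hnne
          · rw [if_neg hte]
            rcases eq_or_ne (c (nxt ℓ t)) e with hne | hne
            · rw [if_pos hne]
              intro x hx
              rw [Finset.mem_inter] at hx ⊢
              refine ⟨hx.1, ?_⟩
              refine hgsub x (hne ▸ hx.2) (mem_U.mpr ⟨c t, ?_, hx.1⟩)
              exact (Finset.mem_insert.mp (hmem t u1 u2)).resolve_left hte
            · rw [if_neg hne]
        refine ih ⟨ℓ, c', h3, hmem', ?_⟩
        intro i j k u1 u2 u3 u4 f hf
        obtain ⟨x, hx⟩ := hS i j k u1 u2 u3 u4 f (Finset.mem_insert_of_mem hf)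
        rw [Finset.mem_sdiff, Finset.mem_union, Finset.mem_union] at hx
        refine ⟨x, ?_⟩
        rw [Finset.mem_sdiff, Finset.mem_union, Finset.mem_union]
        rcases hx with ⟨(hx' | hx') | hx', hxn⟩
        · exact ⟨Or.inl (Or.inl (hsub i u1 (by omega) hx')), hxn⟩
        · exact ⟨Or.inl (Or.inr (hsub j (by omega) (by omega) hx')), hxn⟩
        · exact ⟨Or.inr (hsub k (by omega) u4 hx'), hxn⟩

/-- 2-section adjacency of a hypergraph. -/
def adj (E : Finset (Finset N)) (x y : N) : Prop :=
  x ≠ y ∧ ∃ e ∈ E, x ∈ e ∧ y ∈ e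

lemma adj_symm {E : Finset (Finset N)} {x y : N} (h : adj E x y) : adj E y x :=
  ⟨h.1.symm, h.2.imp fun e ⟨he, h1, h2⟩ => ⟨he, h2, h1⟩⟩

lemma nxt_inj {m i j : ℕ} (hi1 : 1 ≤ i) (hi2 : i ≤ m) (hj1 : 1 ≤ j) (hj2 : j ≤ m)
    (h : nxt m i = nxt m j) : i = j := by
  unfold nxt at h; split_ifs at h <;> omega

/-- A chordless cycle (length ≥ 4) in a graph, as a function. -/
def Cyc (A : N → N → Prop) (m : ℕ) (w : ℕ → N) : Prop :=
  4 ≤ m ∧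
  (∀ i j, 1 ≤ i → i ≤ m → 1 ≤ j → j ≤ m → w i = w j → i = j) ∧
  (∀ i, 1 ≤ i → i ≤ m → A (w i) (w (nxt m i))) ∧
  (∀ i j, 1 ≤ i → i ≤ m → 1 ≤ j → j ≤ m → A (w i) (w j) → j = nxt m i ∨ i = nxt m j)

lemma nxt_spec (m t : ℕ) : (t = m ∧ nxt m t = 1) ∨ (t ≠ m ∧ nxt m t = t + 1) := by
  unfold nxt; split <;> simp_all

/-- A chordless cycle of length ≥ 4 in the 2-section gives a simple cycle. -/
lemma cycle_of_cyc {E : Finset (Finset N)} {m : ℕ} {w : ℕ → N}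
    (h : Cyc (adj E) m w) : ∃ ℓ c, IsSimpleCycle E ℓ c := by
  classical
  obtain ⟨hm4, hinj, hadj, hch⟩ := h
  have hsel : ∀ i, 1 ≤ i → i ≤ m → ∃ e, e ∈ E ∧ w i ∈ e ∧ w (nxt m i) ∈ e := by
    intro i h1 h2
    obtain ⟨-, e, he, h3, h4⟩ := hadj i h1 h2
    exact ⟨e, he, h3, h4⟩
  set c : ℕ → Finset N := fun i =>
    if hi : 1 ≤ i ∧ i ≤ m then (hsel i hi.1 hi.2).choose else ∅ with hc
  have hspec : ∀ i, 1 ≤ i → i ≤ m → c i ∈ E ∧ w i ∈ c i ∧ w (nxt m i) ∈ c i := by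
    intro i h1 h2
    simp only [hc, dif_pos (And.intro h1 h2)]
    exact (hsel i h1 h2).choose_spec
  refine ⟨m, c, by omega, fun i h1 h2 => (hspec i h1 h2).1, ?_⟩
  intro i j k u1 u2 u3 u4 f hf
  by_contra hemp
  rw [Finset.not_nonempty_iff_eq_empty, Finset.sdiff_eq_empty_iff_subset] at hemp
  have hmemS : ∀ t, 1 ≤ t → t ≤ m → cycS c m t ⊆ f →
      w (nxt m t) ∈ f := by
    intro t v1 v2 hsub
    have hn := nxt_bounds v1 v2
    exact hsub (Finset.mem_inter.mpr ⟨(hspec t v1 v2).2.2, (hspec _ hn.1 hn.2).2.1⟩)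
  have hi' : w (nxt m i) ∈ f := hmemS i u1 (by omega) fun x hx =>
    hemp (Finset.mem_union_left _ (Finset.mem_union_left _ hx))
  have hj' : w (nxt m j) ∈ f := hmemS j (by omega) (by omega) fun x hx =>
    hemp (Finset.mem_union_left _ (Finset.mem_union_right _ hx))
  have hk' : w (nxt m k) ∈ f := hmemS k (by omega) u4 fun x hx =>
    hemp (Finset.mem_union_right _ hx)
  set p := nxt m i with hpd
  set q := nxt m j with hqd
  set r := nxt m k with hrd
  have hpb := nxt_bounds u1 (show i ≤ m by omega)
  have hqb := nxt_bounds (show 1 ≤ j by omega) (show j ≤ m by omega)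
  have hrb := nxt_bounds (show 1 ≤ k by omega) u4
  have hpq : p ≠ q := fun hh => by
    have := nxt_inj u1 (by omega) (by omega) (by omega) (hpd ▸ hqd ▸ hh); omega
  have hpr : p ≠ r := fun hh => by
    have := nxt_inj u1 (by omega) (by omega) u4 (hpd ▸ hrd ▸ hh); omega
  have hqr : q ≠ r := fun hh => by
    have := nxt_inj (by omega) (by omega) (by omega) u4 (hqd ▸ hrd ▸ hh); omega
  have hwpq : w p ≠ w q := fun hh => hpq (hinj p q hpb.1 hpb.2 hqb.1 hqb.2 hh)
  have hwpr : w p ≠ w r := fun hh => hpr (hinj p r hpb.1 hpb.2 hrb.1 hrb.2 hh)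
  have hwqr : w q ≠ w r := fun hh => hqr (hinj q r hqb.1 hqb.2 hrb.1 hrb.2 hh)
  have c1 := hch p q hpb.1 hpb.2 hqb.1 hqb.2 ⟨hwpq, f, hf, hi', hj'⟩
  have c2 := hch p r hpb.1 hpb.2 hrb.1 hrb.2 ⟨hwpr, f, hf, hi', hk'⟩
  have c3 := hch q r hqb.1 hqb.2 hrb.1 hrb.2 ⟨hwqr, f, hf, hj', hk'⟩
  have s1 := nxt_spec m i
  have s2 := nxt_spec m j
  have s3 := nxt_spec m k
  have s4 := nxt_spec m p
  have s5 := nxt_spec m q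
  have s6 := nxt_spec m r
  rw [← hpd] at s1; rw [← hqd] at s2; rw [← hrd] at s3
  omega

/-- Conformality relative to the 2-section. -/
def Conformal (E : Finset (Finset N)) : Prop :=
  ∀ K : Finset N, (∀ x ∈ K, x ∈ U E) → (∀ x ∈ K, ∀ y ∈ K, x ≠ y → adj E x y) →
    K.Nonempty → ∃ e ∈ E, K ⊆ e

lemma cycle_of_nonconformal {E : Finset (Finset N)} (h : ¬ Conformal E) :
    ∃ ℓ c, IsSimpleCycle E ℓ c := by
  classical
  unfold Conformal at h
  push_neg at h
  obtain ⟨K₀, hV₀, hcl₀, hne₀, hbad₀⟩ := h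
  set S := (U E).powerset.filter (fun K =>
    K.Nonempty ∧ (∀ x ∈ K, ∀ y ∈ K, x ≠ y → adj E x y) ∧ ∀ e ∈ E, ¬ K ⊆ e) with hSd
  have hS0 : K₀ ∈ S := by
    rw [hSd, Finset.mem_filter, Finset.mem_powerset]
    exact ⟨fun x hx => hV₀ x hx, hne₀, hcl₀, fun e he hsub => hbad₀ e he hsub⟩
  obtain ⟨K, hKS, hKmin⟩ := S.exists_min_image Finset.card ⟨K₀, hS0⟩
  rw [hSd, Finset.mem_filter, Finset.mem_powerset] at hKS
  obtain ⟨hKV, hKne, hKcl, hKbad⟩ := hKS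
  -- K has at least 3 elements
  have hK3 : 3 ≤ K.card := by
    by_contra hlt
    push_neg at hlt
    interval_cases hcard : K.card
    · exact absurd (Finset.card_eq_zero.mp hcard ▸ hKne) (by simp)
    · obtain ⟨u, hu⟩ := Finset.card_eq_one.mp hcard
      obtain ⟨e, he, hue⟩ := mem_U.mp (hKV (hu ▸ Finset.mem_singleton_self u))
      exact hKbad e he (hu ▸ Finset.singleton_subset_iff.mpr hue)
    · obtain ⟨u, v, huv, hK2⟩ := Finset.card_eq_two.mp hcard
      obtain ⟨-, e, he, hue, hve⟩ := hKcl u (hK2 ▸ by simp) v (hK2 ▸ by simp) huv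
      refine hKbad e he ?_
      rw [hK2, Finset.insert_subset_iff, Finset.singleton_subset_iff]
      exact ⟨hue, hve⟩
  obtain ⟨x, hx⟩ := hKne
  have h2 : 2 ≤ (K.erase x).card := by
    have := Finset.card_erase_of_mem hx; omega
  obtain ⟨y, hy⟩ := Finset.card_pos.mp (by omega : 0 < (K.erase x).card)
  have h1 : 1 ≤ ((K.erase x).erase y).card := by
    have := Finset.card_erase_of_mem hy; omega
  obtain ⟨z, hz⟩ := Finset.card_pos.mp (by omega : 0 < ((K.erase x).erase y).card)
  have hyK : y ∈ K := Finset.mem_of_mem_erase hy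
  have hzK : z ∈ K := Finset.mem_of_mem_erase (Finset.mem_of_mem_erase hz)
  have hxy : x ≠ y := fun hh => (Finset.mem_erase.mp hy).1 hh.symm
  have hyz : y ≠ z := fun hh => (Finset.mem_erase.mp hz).1 hh.symm
  have hxz : x ≠ z := fun hh => (Finset.mem_erase.mp (Finset.mem_of_mem_erase hz)).1 hh.symm
  -- minimality: K.erase w is contained in an edge
  have hmin : ∀ u ∈ K, ∃ e ∈ E, K.erase u ⊆ e := by
    intro u hu
    by_contra hno
    push_neg at hno
    have hmem : K.erase u ∈ S := by
      rw [hSd, Finset.mem_filter, Finset.mem_powerset]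
      refine ⟨fun a ha => hKV (Finset.mem_of_mem_erase ha), ?_, ?_, hno⟩
      · rw [← Finset.card_pos, Finset.card_erase_of_mem hu]; omega
      · exact fun a ha b hb => hKcl a (Finset.mem_of_mem_erase ha) b (Finset.mem_of_mem_erase hb)
    have := hKmin _ hmem
    rw [Finset.card_erase_of_mem hu] at this
    omega
  obtain ⟨ex, hex, hexs⟩ := hmin x hx
  obtain ⟨ey, hey, heys⟩ := hmin y hyK
  obtain ⟨ez, hez, hezs⟩ := hmin z hzK
  set c : ℕ → Finset N := fun i => if i = 1 then ex else if i = 2 then ey else ez with hcd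
  refine ⟨3, c, le_rfl, ?_, ?_⟩
  · intro i u1 u2
    simp only [hcd]
    split_ifs <;> assumption
  · intro i j k u1 u2 u3 u4 f hf
    have hi : i = 1 := by omega
    have hj : j = 2 := by omega
    have hk : k = 3 := by omega
    subst hi hj hk
    by_contra hemp
    rw [Finset.not_nonempty_iff_eq_empty, Finset.sdiff_eq_empty_iff_subset] at hemp
    refine hKbad f hf fun a ha => hemp ?_
    have hc1 : cycS c 3 1 = ex ∩ ey := by simp [cycS, hcd]
    have hc2 : cycS c 3 2 = ey ∩ ez := by simp [cycS, hcd]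
    have hc3 : cycS c 3 3 = ez ∩ ex := by simp [cycS, hcd]
    rw [Finset.mem_union, Finset.mem_union, hc1, hc2, hc3]
    by_cases hax : a = x
    · subst hax
      exact Or.inl (Or.inr (Finset.mem_inter.mpr
        ⟨heys (Finset.mem_erase.mpr ⟨hxy, ha⟩), hezs (Finset.mem_erase.mpr ⟨hxz, ha⟩)⟩))
    · by_cases hay : a = y
      · subst hay
        exact Or.inr (Finset.mem_inter.mpr
          ⟨hezs (Finset.mem_erase.mpr ⟨hyz.symm ∘ Eq.symm, ha⟩),
           hexs (Finset.mem_erase.mpr ⟨fun hh => hxy hh.symm, ha⟩)⟩)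
      · exact Or.inl (Or.inl (Finset.mem_inter.mpr
          ⟨hexs (Finset.mem_erase.mpr ⟨hax, ha⟩), heys (Finset.mem_erase.mpr ⟨hay, ha⟩)⟩))

lemma cyc_congr {A B : N → N → Prop} (h : ∀ x y, A x y ↔ B x y) {m : ℕ} {w : ℕ → N}
    (hc : Cyc A m w) : Cyc B m w := by
  obtain ⟨h1, h2, h3, h4⟩ := hc
  exact ⟨h1, h2, fun i u1 u2 => (h _ _).mp (h3 i u1 u2),
    fun i j u1 u2 u3 u4 hB => h4 i j u1 u2 u3 u4 ((h _ _).mpr hB)⟩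

/-- u is a simplicial vertex. -/
def Simp (A : N → N → Prop) (u : N) : Prop :=
  ∀ x y, A u x → A u y → x ≠ y → A x y

/-- Reachability avoiding a separator. -/
def Reach (A : N → N → Prop) (S : Finset N) : N → N → Prop :=
  Relation.ReflTransGen (fun p q => A p q ∧ p ∉ S ∧ q ∉ S)

lemma reach_walk {A : N → N → Prop} {S : Finset N} {x y : N}
    (h : Reach A S x y) :
    ∃ n : ℕ, ∃ w : ℕ → N, w 0 = x ∧ w n = y ∧ (∀ r < n, A (w r) (w (r+1))) ∧
      ∀ r ≤ n, Reach A S x (w r) := by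
  unfold Reach at h ⊢
  induction h using Relation.ReflTransGen.head_induction_on with
  | refl => exact ⟨0, fun _ => y, rfl, rfl, by omega, fun r _ => Relation.ReflTransGen.refl⟩
  | @head p c hpc hcy ih =>
    obtain ⟨n, w, hw0, hwn, hstep, hreach⟩ := ih
    refine ⟨n + 1, fun r => if r = 0 then p else w (r - 1), by simp, by simp [hwn], ?_, ?_⟩
    · intro r hr
      rcases Nat.eq_zero_or_pos r with rfl | hrpos
      · simpa [hw0] using hpc.1
      · have h1 : r ≠ 0 := by omega
        have h2 : r + 1 ≠ 0 := by omega
        simp only [h1, h2, if_false]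
        have : r - 1 < n := by omega
        have := hstep (r - 1) this
        have hre : r - 1 + 1 = r + 1 - 1 := by omega
        rwa [hre] at this
    · intro r hr
      rcases Nat.eq_zero_or_pos r with rfl | hrpos
      · simp only [if_pos rfl]
        exact Relation.ReflTransGen.refl
      · have h1 : r ≠ 0 := by omega
        simp only [h1, if_false]
        exact Relation.ReflTransGen.head hpc (hreach (r - 1) (by omega))

lemma minpath (A : N → N → Prop) (Ac : Finset N) {s t : N}
    (hex : ∃ n, ∃ w : ℕ → N, w 0 = s ∧ w n = t ∧ (∀ r < n, A (w r) (w (r+1))) ∧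
      (∀ r, 0 < r → r < n → w r ∈ Ac))
    (hst : s ≠ t) (hnadj : ¬ A s t) :
    ∃ n : ℕ, ∃ w : ℕ → N, 2 ≤ n ∧ w 0 = s ∧ w n = t ∧ (∀ r < n, A (w r) (w (r+1))) ∧
      (∀ r, 0 < r → r < n → w r ∈ Ac) ∧
      (∀ a b, a < b → b ≤ n → w a = w b → False) ∧
      (∀ a b, a + 2 ≤ b → b ≤ n → ¬ A (w a) (w b)) := by
  classical
  set n₀ := Nat.find hex with hn₀d
  obtain ⟨w, hw0, hwn, hstep, hint⟩ := Nat.find_spec hex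
  rw [← hn₀d] at hwn hstep hint
  have hsplice : ∀ (nv : ℕ), nv < n₀ → ∀ v : ℕ → N, v 0 = s → v nv = t →
      (∀ r < nv, A (v r) (v (r+1))) → (∀ r, 0 < r → r < nv → v r ∈ Ac) → False := by
    intro nv hlt v h1 h2 h3 h4
    exact Nat.find_min hex hlt ⟨v, h1, h2, h3, h4⟩
  have hn2 : 2 ≤ n₀ := by
    by_contra hlt
    push_neg at hlt
    have h01 : n₀ = 0 ∨ n₀ = 1 := by omega
    rcases h01 with h0 | h0
    · rw [h0] at hwn
      exact hst (hw0.symm.trans hwn)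
    · have hs1 := hstep 0 (by omega)
      rw [hw0] at hs1
      have he : (0 : ℕ) + 1 = n₀ := by omega
      rw [he, hwn] at hs1
      exact hnadj hs1
  refine ⟨n₀, w, hn2, hw0, hwn, hstep, hint, ?_, ?_⟩
  · -- injectivity
    intro a b hab hbn heq
    obtain ⟨d, rfl⟩ : ∃ d, b = a + d + 1 := ⟨b - a - 1, by omega⟩
    set v : ℕ → N := fun r => if r ≤ a then w r else w (r + d + 1) with hvd
    refine hsplice (n₀ - (d + 1)) (by omega) v ?_ ?_ ?_ ?_
    · simp only [hvd]
      rw [if_pos (Nat.zero_le a)]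
      exact hw0
    · simp only [hvd]
      by_cases hle : n₀ - (d + 1) ≤ a
      · have h1 : a + d + 1 = n₀ := by omega
        rw [if_pos hle]
        have h2 : n₀ - (d + 1) = a := by omega
        rw [h2, heq, h1, hwn]
      · rw [if_neg hle]
        have h1 : n₀ - (d + 1) + d + 1 = n₀ := by omega
        rw [h1, hwn]
    · intro r hr
      simp only [hvd]
      rcases lt_trichotomy r a with h1 | rfl | h1
      · rw [if_pos (by omega), if_pos (by omega)]
        exact hstep r (by omega)
      · rw [if_pos le_rfl, if_neg (by omega)]
        have h2 : r + 1 + d + 1 = (r + d + 1) + 1 := by omega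
        rw [h2, heq]
        exact hstep (r + d + 1) (by omega)
      · rw [if_neg (by omega), if_neg (by omega)]
        have h2 : r + 1 + d + 1 = (r + d + 1) + 1 := by omega
        rw [h2]
        exact hstep (r + d + 1) (by omega)
    · intro r hr1 hr2
      simp only [hvd]
      by_cases hle : r ≤ a
      · rw [if_pos hle]
        exact hint r hr1 (by omega)
      · rw [if_neg hle]
        exact hint (r + d + 1) (by omega) (by omega)
  · -- chordfree
    intro a b hab hbn hA
    obtain ⟨d, rfl⟩ : ∃ d, b = a + d + 2 := ⟨b - a - 2, by omega⟩
    set v : ℕ → N := fun r => if r ≤ a then w r else w (r + d + 1) with hvd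
    refine hsplice (n₀ - (d + 1)) (by omega) v ?_ ?_ ?_ ?_
    · simp only [hvd]
      rw [if_pos (Nat.zero_le a)]
      exact hw0
    · simp only [hvd]
      rw [if_neg (by omega)]
      have h1 : n₀ - (d + 1) + d + 1 = n₀ := by omega
      rw [h1, hwn]
    · intro r hr
      simp only [hvd]
      rcases lt_trichotomy r a with h1 | rfl | h1
      · rw [if_pos (by omega), if_pos (by omega)]
        exact hstep r (by omega)
      · rw [if_pos le_rfl, if_neg (by omega)]
        have h2 : r + 1 + d + 1 = r + d + 2 := by omega
        rw [h2]
        exact hA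
      · rw [if_neg (by omega), if_neg (by omega)]
        have h2 : r + 1 + d + 1 = (r + d + 1) + 1 := by omega
        rw [h2]
        exact hstep (r + d + 1) (by omega)
    · intro r hr1 hr2
      simp only [hvd]
      by_cases hle : r ≤ a
      · rw [if_pos hle]
        exact hint r hr1 (by omega)
      · rw [if_neg hle]
        exact hint (r + d + 1) (by omega) (by omega)

lemma cycle_build (A : N → N → Prop) (hsym : ∀ {x y}, A x y → A y x) (hirr : ∀ x, ¬A x x)
    (Ac Bc : Finset N) {s t : N}
    (hdisj : ∀ z, z ∈ Ac → z ∈ Bc → False)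
    (hnadjAB : ∀ x ∈ Ac, ∀ y ∈ Bc, ¬ A x y)
    (hsA : s ∉ Ac) (hsB : s ∉ Bc) (htA : t ∉ Ac) (htB : t ∉ Bc)
    {n : ℕ} {w : ℕ → N} (hn : 2 ≤ n) (hw0 : w 0 = s) (hwn : w n = t)
    (hstep : ∀ r < n, A (w r) (w (r+1)))
    (hint : ∀ r, 0 < r → r < n → w r ∈ Ac)
    (hinj : ∀ a b, a < b → b ≤ n → w a = w b → False)
    (hchord : ∀ a b, a + 2 ≤ b → b ≤ n → ¬ A (w a) (w b))
    {n' : ℕ} {w' : ℕ → N} (hn' : 2 ≤ n') (hw0' : w' 0 = s) (hwn' : w' n' = t)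
    (hstep' : ∀ r < n', A (w' r) (w' (r+1)))
    (hint' : ∀ r, 0 < r → r < n' → w' r ∈ Bc)
    (hinj' : ∀ a b, a < b → b ≤ n' → w' a = w' b → False)
    (hchord' : ∀ a b, a + 2 ≤ b → b ≤ n' → ¬ A (w' a) (w' b)) :
    ∃ m ω, Cyc A m ω := by
  set m := n + n' with hmd
  set ω : ℕ → N := fun i => if i ≤ n + 1 then w (i - 1) else w' (m + 1 - i) with hωd
  have hval1 : ∀ i, i ≤ n + 1 → ω i = w (i - 1) := by
    intro i hi
    simp only [hωd]
    rw [if_pos hi]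
  have hval1' : ∀ i, i ≤ n + 1 → ω i = w (i - 1) := hval1
  have hval2 : ∀ i, n + 2 ≤ i → ω i = w' (m + 1 - i) := by
    intro i hi
    simp only [hωd]
    rw [if_neg (show ¬ i ≤ n + 1 by omega)]
  -- classification of first-segment values
  have hclass1 : ∀ i, 1 ≤ i → i ≤ n + 1 →
      (i = 1 ∧ ω i = s) ∨ (i = n + 1 ∧ ω i = t) ∨ (2 ≤ i ∧ i ≤ n ∧ ω i ∈ Ac) := by
    intro i h1 h2
    rcases eq_or_ne i 1 with rfl | hne1
    · exact Or.inl ⟨rfl, by rw [hval1 1 (by omega)]; simpa using hw0⟩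
    rcases eq_or_ne i (n + 1) with rfl | hne2
    · refine Or.inr (Or.inl ⟨rfl, ?_⟩)
      rw [hval1 _ le_rfl]
      have : n + 1 - 1 = n := by omega
      rw [this, hwn]
    · refine Or.inr (Or.inr ⟨by omega, by omega, ?_⟩)
      rw [hval1 i h2]
      exact hint (i - 1) (by omega) (by omega)
  have hclass2 : ∀ i, n + 2 ≤ i → i ≤ m → ω i ∈ Bc := by
    intro i h1 h2
    rw [hval2 i h1]
    exact hint' (m + 1 - i) (by omega) (by omega)
  refine ⟨m, ω, by omega, ?_, ?_, ?_⟩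
  · -- injectivity
    intro i j hi1 hi2 hj1 hj2 heq
    by_contra hne
    have key : ∀ i j, 1 ≤ i → i ≤ m → 1 ≤ j → j ≤ m → i ≤ n + 1 → n + 2 ≤ j →
        ω i = ω j → False := by
      intro i j hi1 hi2 hj1 hj2 hseg1 hseg2 heq
      have hjB : ω j ∈ Bc := hclass2 j hseg2 hj2
      rcases hclass1 i hi1 hseg1 with ⟨-, hv⟩ | ⟨-, hv⟩ | ⟨-, -, hv⟩
      · -- ω i = s = w' 0
        rw [hv] at heq
        rw [hval2 j hseg2] at heq
        exact hinj' 0 (m + 1 - j) (by omega) (by omega) (hw0'.symm ▸ heq)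
      · rw [hv] at heq
        rw [hval2 j hseg2] at heq
        exact hinj' (m + 1 - j) n' (by omega) le_rfl (hwn'.symm ▸ heq).symm
      · exact hdisj _ (heq ▸ hv) hjB
    rcases le_or_gt i (n + 1) with hseg_i | hseg_i <;> rcases le_or_gt j (n + 1) with hseg_j | hseg_j
    · -- both first segment
      rw [hval1 i hseg_i, hval1 j hseg_j] at heq
      rcases lt_trichotomy i j with h | h | h
      · exact hinj (i - 1) (j - 1) (by omega) (by omega) heq
      · exact hne h
      · exact hinj (j - 1) (i - 1) (by omega) (by omega) heq.symm
    · exact key i j hi1 hi2 hj1 hj2 hseg_i (by omega) heq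
    · exact key j i hj1 hj2 hi1 hi2 hseg_j (by omega) heq.symm
    · rw [hval2 i (by omega), hval2 j (by omega)] at heq
      rcases lt_trichotomy i j with h | h | h
      · exact hinj' (m + 1 - j) (m + 1 - i) (by omega) (by omega) heq.symm
      · exact hne h
      · exact hinj' (m + 1 - i) (m + 1 - j) (by omega) (by omega) heq
  · -- adjacency
    intro i h1 h2
    have hnxt := nxt_spec m i
    rcases eq_or_ne i m with rfl | him
    · have hnx : nxt m m = 1 := by unfold nxt; simp
      rw [hnx, hval2 m (by omega), hval1 1 (by omega)]
      have e1 : m + 1 - m = 1 := by omega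
      have e2 : (1 : ℕ) - 1 = 0 := by omega
      rw [e1, e2, hw0, ← hw0']
      exact hsym (hstep' 0 (by omega))
    · have hnx : nxt m i = i + 1 := by unfold nxt; rw [if_neg him]
      rw [hnx]
      rcases le_or_gt i n with h | h
      · rw [hval1 i (by omega), hval1 (i+1) (by omega)]
        have e1 : i + 1 - 1 = (i - 1) + 1 := by omega
        rw [e1]
        exact hstep (i - 1) (by omega)
      · rcases eq_or_ne i (n + 1) with rfl | hi2'
        · rw [hval1 (n+1) le_rfl, hval2 (n+2) le_rfl]
          have e1 : n + 1 - 1 = n := by omega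
          have e2 : m + 1 - (n + 2) = n' - 1 := by omega
          rw [e1, e2, hwn, ← hwn']
          have e3 : n' - 1 + 1 = n' := by omega
          have := hstep' (n' - 1) (by omega)
          rw [e3] at this
          exact hsym this
        · rw [hval2 i (by omega), hval2 (i+1) (by omega)]
          have e1 : m + 1 - i = (m - i) + 1 := by omega
          rw [e1]
          have e2 : m + 1 - (i + 1) = m - i := by omega
          rw [e2]
          exact hsym (hstep' (m - i) (by omega))
  · -- chordless
    intro i j hi1 hi2 hj1 hj2 hA
    have hnxt_eq : ∀ p, 1 ≤ p → p < m → nxt m p = p + 1 := by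
      intro p _ hp; unfold nxt; rw [if_neg (by omega)]
    have hnxt_m : nxt m m = 1 := by unfold nxt; simp
    have key : ∀ i j, 1 ≤ i → i ≤ m → 1 ≤ j → j ≤ m → i ≤ n + 1 → n + 2 ≤ j →
        A (ω i) (ω j) → j = nxt m i ∨ i = nxt m j := by
      intro i j hi1 hi2 hj1 hj2 hseg1 hseg2 hA
      have hjB : ω j ∈ Bc := hclass2 j hseg2 hj2
      rcases hclass1 i hi1 hseg1 with ⟨hiv, hv⟩ | ⟨hiv, hv⟩ | ⟨-, -, hv⟩
      · -- ω i = s : A (w' 0) (w' (m+1-j)) chord unless m+1-j = 1 i.e. j = m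
        rw [hv, hval2 j hseg2, ← hw0'] at hA
        rcases eq_or_ne j m with rfl | hjm
        · right; rw [hnxt_m, hiv]
        · exfalso
          exact hchord' 0 (m + 1 - j) (by omega) (by omega) hA
      · -- ω i = t
        rw [hv, hval2 j hseg2, ← hwn'] at hA
        rcases eq_or_ne j (n + 2) with rfl | hjn2
        · left
          rw [hnxt_eq i hi1 (by omega), hiv]
        · exfalso
          refine hchord' (m + 1 - j) n' (by omega) le_rfl (hsym hA)
      · exact absurd hA (hnadjAB _ hv _ hjB)
    rcases le_or_gt i (n + 1) with hseg_i | hseg_i <;> rcases le_or_gt j (n + 1) with hseg_j | hseg_j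
    · -- both in first segment
      rw [hval1 i hseg_i, hval1 j hseg_j] at hA
      rcases lt_trichotomy i j with h | rfl | h
      · have : j = i + 1 := by
          by_contra hne'
          exact hchord (i - 1) (j - 1) (by omega) (by omega) hA
        left; rw [hnxt_eq i hi1 (by omega), this]
      · exact absurd hA (hirr _)
      · have : i = j + 1 := by
          by_contra hne'
          exact hchord (j - 1) (i - 1) (by omega) (by omega) (hsym hA)
        right; rw [hnxt_eq j hj1 (by omega), this]
    · exact key i j hi1 hi2 hj1 hj2 hseg_i (by omega) hA
    · rcases key j i hj1 hj2 hi1 hi2 hseg_j (by omega) (hsym hA) with h | h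
      · exact Or.inr h
      · exact Or.inl h
    · -- both in second segment
      rw [hval2 i (by omega), hval2 j (by omega)] at hA
      rcases lt_trichotomy i j with h | rfl | h
      · -- m+1-j < m+1-i
        have : m + 1 - i = (m + 1 - j) + 1 := by
          by_contra hne'
          exact hchord' (m + 1 - j) (m + 1 - i) (by omega) (by omega) (hsym hA)
        -- j = i + 1
        left
        rw [hnxt_eq i hi1 (by omega)]
        omega
      · exact absurd hA (hirr _)
      · have : m + 1 - j = (m + 1 - i) + 1 := by
          by_contra hne'
          exact hchord' (m + 1 - i) (m + 1 - j) (by omega) (by omega) hA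
        right
        rw [hnxt_eq j hj1 (by omega)]
        omega

/-- Dirac's theorem: a finite graph contains a chordless cycle of length ≥ 4,
or is complete, or has two nonadjacent simplicial vertices. -/
theorem dirac_aux : ∀ (k : ℕ) (A : N → N → Prop), (∀ {x y}, A x y → A y x) → (∀ x, ¬ A x x) →
    ∀ W : Finset N, (∀ x y, A x y → x ∈ W ∧ y ∈ W) → W.card ≤ k → W.Nonempty →
    (∃ m w, Cyc A m w) ∨ (∀ x ∈ W, ∀ y ∈ W, x ≠ y → A x y) ∨
      (∃ u ∈ W, ∃ v ∈ W, u ≠ v ∧ ¬ A u v ∧ Simp A u ∧ Simp A v) := by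
  intro k
  induction k with
  | zero =>
    intro A _ _ W _ hcard hne
    exact absurd (Finset.card_pos.mpr hne) (by omega)
  | succ k ih =>
    intro A hsym hirr W hsupp hcard hne
    classical
    by_cases hcomp : ∀ x ∈ W, ∀ y ∈ W, x ≠ y → A x y
    · exact Or.inr (Or.inl hcomp)
    push_neg at hcomp
    obtain ⟨a, haW, b, hbW, hab, hnadjab⟩ := hcomp
    have hReachsymm : ∀ (S : Finset N) (p q : N), Reach A S p q → Reach A S q p := by
      intro S p q h
      exact (@Relation.ReflTransGen.symmetric _ _ ⟨fun p q hh => ⟨hsym hh.1, hh.2.2, hh.2.1⟩⟩).symm _ _ h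
    have hS₀ : ¬ Reach A (W \ {a, b}) a b := by
      intro h
      rcases Relation.ReflTransGen.cases_head h with heq | ⟨c, hstep, -⟩
      · exact hab heq
      · have hcW : c ∈ W := (hsupp _ _ hstep.1).2
        have hcm : c = a ∨ c = b := by
          have h2 := hstep.2.2
          simp only [Finset.mem_sdiff, Finset.mem_insert, Finset.mem_singleton] at h2
          tauto
        rcases hcm with rfl | rfl
        · exact hirr _ hstep.1
        · exact hnadjab hstep.1
    set 𝒮 := (W \ {a, b}).powerset.filter (fun S => ¬ Reach A S a b) with h𝒮d
    have h𝒮ne : 𝒮.Nonempty := ⟨W \ {a, b}, by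
      rw [h𝒮d, Finset.mem_filter, Finset.mem_powerset]
      exact ⟨le_refl _, hS₀⟩⟩
    obtain ⟨S, hS𝒮, hSmin⟩ := 𝒮.exists_min_image Finset.card h𝒮ne
    rw [h𝒮d, Finset.mem_filter, Finset.mem_powerset] at hS𝒮
    obtain ⟨hSsub, hsep⟩ := hS𝒮
    have haS : a ∉ S := by
      intro h
      have h2 := hSsub h
      rw [Finset.mem_sdiff] at h2
      exact h2.2 (Finset.mem_insert_self a {b})
    have hbS : b ∉ S := by
      intro h
      have h2 := hSsub h
      rw [Finset.mem_sdiff] at h2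
      exact h2.2 (by simp)
    have hSW : ∀ x ∈ S, x ∈ W := fun x hx => (Finset.mem_sdiff.mp (hSsub hx)).1
    set Ac := W.filter (fun z => z ∉ S ∧ Reach A S a z) with hAcd
    set Bc := W.filter (fun z => z ∉ S ∧ Reach A S b z) with hBcd
    have haA : a ∈ Ac := by
      rw [hAcd, Finset.mem_filter]
      exact ⟨haW, haS, Relation.ReflTransGen.refl⟩
    have hbB : b ∈ Bc := by
      rw [hBcd, Finset.mem_filter]
      exact ⟨hbW, hbS, Relation.ReflTransGen.refl⟩
    have hclA : ∀ z ∈ Ac, ∀ q, A z q → q ∉ S → q ∈ Ac := by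
      intro z hz q hA hqS
      rw [hAcd, Finset.mem_filter] at hz ⊢
      exact ⟨(hsupp _ _ hA).2, hqS, Relation.ReflTransGen.tail hz.2.2 ⟨hA, hz.2.1, hqS⟩⟩
    have hclB : ∀ z ∈ Bc, ∀ q, A z q → q ∉ S → q ∈ Bc := by
      intro z hz q hA hqS
      rw [hBcd, Finset.mem_filter] at hz ⊢
      exact ⟨(hsupp _ _ hA).2, hqS, Relation.ReflTransGen.tail hz.2.2 ⟨hA, hz.2.1, hqS⟩⟩
    have hdisjAB : ∀ z, z ∈ Ac → z ∈ Bc → False := by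
      intro z hz1 hz2
      rw [hAcd, Finset.mem_filter] at hz1
      rw [hBcd, Finset.mem_filter] at hz2
      exact hsep (Relation.ReflTransGen.trans hz1.2.2 (hReachsymm _ _ _ hz2.2.2))
    have hnadjAB : ∀ x ∈ Ac, ∀ y ∈ Bc, ¬ A x y := by
      intro x hx y hy hA
      have hyS : y ∉ S := (Finset.mem_filter.mp hy).2.1
      exact hdisjAB y (hclA x hx y hA hyS) hy
    have hbA : b ∉ Ac := fun h => hsep (Finset.mem_filter.mp h).2.2
    have haB : a ∉ Bc := fun h => hsep (hReachsymm _ _ _ (Finset.mem_filter.mp h).2.2)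
    have hit : ∀ s' ∈ S, ∀ u v : N, ¬ Reach A S u v →
        ∀ y, Reach A (S.erase s') y v → Reach A S u y → y ∉ S →
        ∃ x, Reach A S u x ∧ x ∉ S ∧ A x s' := by
      intro s' hs' u v hnr y hr
      unfold Reach at hr
      induction hr using Relation.ReflTransGen.head_induction_on with
      | refl =>
        intro hr' _
        exact absurd hr' hnr
      | @head y c hyc hcv ihc =>
        intro hry hyS
        by_cases hcs : c = s'
        · exact ⟨y, hry, hyS, hcs ▸ hyc.1⟩
        · have hcS : c ∉ S := by
            have h2 := hyc.2.2
            rw [Finset.mem_erase] at h2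
            tauto
          exact ihc (Relation.ReflTransGen.tail hry ⟨hyc.1, hyS, hcS⟩) hcS
    have hf2A : ∀ s' ∈ S, ∃ x ∈ Ac, A x s' := by
      intro s' hs'
      have hcards : (S.erase s').card < S.card := Finset.card_erase_lt_of_mem hs'
      have hmem' : S.erase s' ⊆ W \ {a, b} := (Finset.erase_subset _ _).trans hSsub
      have hrab : Reach A (S.erase s') a b := by
        by_contra hnr
        have hle : S.card ≤ (S.erase s').card := hSmin _ (by
          rw [h𝒮d, Finset.mem_filter, Finset.mem_powerset]
          exact ⟨hmem', hnr⟩)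
        omega
      obtain ⟨x, hx1, hx2, hx3⟩ := hit s' hs' a b hsep a hrab Relation.ReflTransGen.refl haS
      refine ⟨x, ?_, hx3⟩
      rw [hAcd, Finset.mem_filter]
      exact ⟨(hsupp _ _ hx3).1, hx2, hx1⟩
    have hf2B : ∀ s' ∈ S, ∃ x ∈ Bc, A x s' := by
      intro s' hs'
      have hcards : (S.erase s').card < S.card := Finset.card_erase_lt_of_mem hs'
      have hmem' : S.erase s' ⊆ W \ {a, b} := (Finset.erase_subset _ _).trans hSsub
      have hnra : ¬ Reach A S b a := fun h => hsep (hReachsymm _ _ _ h)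
      have hrba : Reach A (S.erase s') b a := by
        by_contra hnr
        have hrab : ¬ Reach A (S.erase s') a b := by
          intro h
          exact hnr (hReachsymm _ _ _ h)
        have hle : S.card ≤ (S.erase s').card := hSmin _ (by
          rw [h𝒮d, Finset.mem_filter, Finset.mem_powerset]
          exact ⟨hmem', hrab⟩)
        omega
      obtain ⟨x, hx1, hx2, hx3⟩ := hit s' hs' b a hnra b hrba Relation.ReflTransGen.refl hbS
      refine ⟨x, ?_, hx3⟩
      rw [hBcd, Finset.mem_filter]
      exact ⟨(hsupp _ _ hx3).1, hx2, hx1⟩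
    by_cases hclq : ∀ s' ∈ S, ∀ t' ∈ S, s' ≠ t' → A s' t'
    · -- S is a clique: recurse on both sides
      have side : ∀ Cc : Finset N, Cc.Nonempty → (∀ z ∈ Cc, z ∈ W) → (∀ z ∈ Cc, z ∉ S) →
          (∀ z ∈ Cc, ∀ q, A z q → q ∈ Cc ∨ q ∈ S) → (∃ z ∈ W, z ∉ Cc ∧ z ∉ S) →
          (∃ m w, Cyc A m w) ∨ ∃ u ∈ Cc, Simp A u := by
        intro Cc hCcne hCcW hCcS hclose hout
        set W' := Cc ∪ S with hW'd
        set A' : N → N → Prop := fun x y => A x y ∧ x ∈ W' ∧ y ∈ W' with hA'd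
        have hcard' : W'.card ≤ k := by
          obtain ⟨z, hzW, hz1, hz2⟩ := hout
          have hss : W' ⊆ W := by
            intro x hx
            rcases Finset.mem_union.mp hx with h | h
            · exact hCcW x h
            · exact hSW x h
          have hzW' : z ∉ W' := by
            rw [hW'd, Finset.mem_union]
            tauto
          have hlt : W'.card < W.card :=
            Finset.card_lt_card (Finset.ssubset_iff_of_subset hss |>.mpr ⟨z, hzW, hzW'⟩)
          omega
        obtain ⟨z0, hz0⟩ := hCcne
        rcases ih A' (fun {x y} h => ⟨hsym h.1, h.2.2, h.2.1⟩) (fun x h => hirr x h.1) W'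
          (fun x y h => ⟨h.2.1, h.2.2⟩) hcard' ⟨z0, Finset.mem_union_left _ hz0⟩ with
          hc | hc | hc
        · left
          obtain ⟨m, w, h1, h2, h3, h4⟩ := hc
          refine ⟨m, w, h1, h2, fun i u1 u2 => (h3 i u1 u2).1, ?_⟩
          intro i j u1 u2 u3 u4 hAij
          exact h4 i j u1 u2 u3 u4 ⟨hAij, (h3 i u1 u2).2.1, (h3 j u3 u4).2.1⟩
        · right
          refine ⟨z0, hz0, ?_⟩
          intro x y hux huy hxy
          have hx' : x ∈ W' := by
            rcases hclose z0 hz0 x hux with h | h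
            · exact Finset.mem_union_left _ h
            · exact Finset.mem_union_right _ h
          have hy' : y ∈ W' := by
            rcases hclose z0 hz0 y huy with h | h
            · exact Finset.mem_union_left _ h
            · exact Finset.mem_union_right _ h
          exact (hc x hx' y hy' hxy).1
        · obtain ⟨u, hu, v, hv, huv, hnadj', hSu, hSv⟩ := hc
          have hlift : ∀ z ∈ Cc, Simp A' z → Simp A z := by
            intro z hz hS' x y hzx hzy hxy
            have hx' : x ∈ W' := by
              rcases hclose z hz x hzx with h | h
              · exact Finset.mem_union_left _ h
              · exact Finset.mem_union_right _ h
            have hy' : y ∈ W' := by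
              rcases hclose z hz y hzy with h | h
              · exact Finset.mem_union_left _ h
              · exact Finset.mem_union_right _ h
            have hz' : z ∈ W' := Finset.mem_union_left _ hz
            exact (hS' x y ⟨hzx, hz', hx'⟩ ⟨hzy, hz', hy'⟩ hxy).1
          have hone : u ∈ Cc ∨ v ∈ Cc := by
            rcases Finset.mem_union.mp hu with h | h
            · exact Or.inl h
            rcases Finset.mem_union.mp hv with h' | h'
            · exact Or.inr h'
            exact absurd ⟨hclq u h v h' huv, hu, hv⟩ hnadj'
          rcases hone with h | h
          · exact Or.inr ⟨u, h, hlift u h hSu⟩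
          · exact Or.inr ⟨v, h, hlift v h hSv⟩
      rcases side Ac ⟨a, haA⟩ (fun z hz => (Finset.mem_filter.mp hz).1)
        (fun z hz => (Finset.mem_filter.mp hz).2.1)
        (fun z hz q hA => by
          by_cases hqS : q ∈ S
          · exact Or.inr hqS
          · exact Or.inl (hclA z hz q hA hqS))
        ⟨b, hbW, hbA, hbS⟩ with hc | hcA
      · exact Or.inl hc
      rcases side Bc ⟨b, hbB⟩ (fun z hz => (Finset.mem_filter.mp hz).1)
        (fun z hz => (Finset.mem_filter.mp hz).2.1)
        (fun z hz q hA => by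
          by_cases hqS : q ∈ S
          · exact Or.inr hqS
          · exact Or.inl (hclB z hz q hA hqS))
        ⟨a, haW, haB, haS⟩ with hc | hcB
      · exact Or.inl hc
      obtain ⟨uA, huA, hSuA⟩ := hcA
      obtain ⟨uB, huB, hSuB⟩ := hcB
      right; right
      refine ⟨uA, (Finset.mem_filter.mp huA).1, uB, (Finset.mem_filter.mp huB).1, ?_, ?_, hSuA, hSuB⟩
      · intro hEq
        exact hdisjAB uA huA (hEq ▸ huB)
      · intro hA
        exact hnadjAB uA huA uB huB hA
    · -- S is not a clique: build a chordless cycle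
      push_neg at hclq
      obtain ⟨s', hs'S, t', ht'S, hst', hnadjst⟩ := hclq
      left
      have hAcReach : ∀ x z, x ∈ Ac → Reach A S x z → z ∈ Ac := by
        intro x z hx hz
        unfold Reach at hz
        induction hz with
        | refl => exact hx
        | tail hr hstep ihz => exact hclA _ ihz _ hstep.1 hstep.2.2
      have hBcReach : ∀ x z, x ∈ Bc → Reach A S x z → z ∈ Bc := by
        intro x z hx hz
        unfold Reach at hz
        induction hz with
        | refl => exact hx
        | tail hr hstep ihz => exact hclB _ ihz _ hstep.1 hstep.2.2
      have hpath : ∀ Cc : Finset N, (∀ s'' ∈ S, ∃ x ∈ Cc, A x s'') →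
          (∀ x z, x ∈ Cc → Reach A S x z → z ∈ Cc) →
          (∀ z ∈ Cc, z ∉ S ∧ Reach A S (if Cc = Ac then a else b) z) →
          ∃ n : ℕ, ∃ w : ℕ → N, w 0 = s' ∧ w n = t' ∧ (∀ r < n, A (w r) (w (r+1))) ∧
            (∀ r, 0 < r → r < n → w r ∈ Cc) := by
        intro Cc hf2 hclosed hprops
        obtain ⟨x, hx, hxs⟩ := hf2 s' hs'S
        obtain ⟨x', hx', hxt⟩ := hf2 t' ht'S
        have hreach_xx' : Reach A S x x' := by
          have h1 := (hprops x hx).2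
          have h2 := (hprops x' hx').2
          exact Relation.ReflTransGen.trans (hReachsymm _ _ _ h1) h2
        obtain ⟨n, w, hw0, hwn, hstep, hreach⟩ := reach_walk hreach_xx'
        set wf : ℕ → N := fun r => if r = 0 then s' else if r ≤ n + 1 then w (r - 1) else t'
          with hwfd
        refine ⟨n + 2, wf, by simp [hwfd], ?_, ?_, ?_⟩
        · simp only [hwfd]
          rw [if_neg (show ¬ n + 2 = 0 by omega), if_neg (show ¬ n + 2 ≤ n + 1 by omega)]
        · intro r hr
          simp only [hwfd]
          rcases Nat.eq_zero_or_pos r with rfl | hrpos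
          · rw [if_pos rfl, if_neg (show ¬ (0:ℕ) + 1 = 0 by omega),
              if_pos (show (0:ℕ) + 1 ≤ n + 1 by omega)]
            simpa [hw0] using hsym hxs
          · rcases eq_or_ne r (n + 1) with rfl | hrne
            · rw [if_neg (show ¬ n + 1 = 0 by omega), if_pos le_rfl,
                if_neg (show ¬ n + 1 + 1 = 0 by omega), if_neg (show ¬ n + 1 + 1 ≤ n + 1 by omega)]
              have e1 : n + 1 - 1 = n := by omega
              rw [e1, hwn]
              exact hxt
            · rw [if_neg (show ¬ r = 0 by omega), if_pos (show r ≤ n + 1 by omega),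
                if_neg (show ¬ r + 1 = 0 by omega), if_pos (show r + 1 ≤ n + 1 by omega)]
              have e1 : r + 1 - 1 = (r - 1) + 1 := by omega
              rw [e1]
              exact hstep (r - 1) (by omega)
        · intro r hr1 hr2
          simp only [hwfd]
          rw [if_neg (show ¬ r = 0 by omega), if_pos (show r ≤ n + 1 by omega)]
          exact hclosed x _ hx (hreach (r - 1) (by omega))
      obtain ⟨nA, wA, hA0, hAn, hAstep, hAint⟩ := hpath Ac hf2A hAcReach
        (fun z hz => by
          rw [if_pos rfl]
          exact ⟨(Finset.mem_filter.mp hz).2.1, (Finset.mem_filter.mp hz).2.2⟩)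
      have hAcBc : Ac ≠ Bc := by
        intro hEq
        exact hdisjAB a haA (hEq ▸ haA)
      obtain ⟨nB, wB, hB0, hBn, hBstep, hBint⟩ := hpath Bc hf2B hBcReach
        (fun z hz => by
          rw [if_neg (Ne.symm hAcBc)]
          exact ⟨(Finset.mem_filter.mp hz).2.1, (Finset.mem_filter.mp hz).2.2⟩)
      have hs'Ac : s' ∉ Ac := fun h => (Finset.mem_filter.mp h).2.1 hs'S
      have hs'Bc : s' ∉ Bc := fun h => (Finset.mem_filter.mp h).2.1 hs'S
      have ht'Ac : t' ∉ Ac := fun h => (Finset.mem_filter.mp h).2.1 ht'S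
      have ht'Bc : t' ∉ Bc := fun h => (Finset.mem_filter.mp h).2.1 ht'S
      obtain ⟨n1, w1, hp1, hp2, hp3, hp4, hp5, hp6, hp7⟩ :=
        minpath A Ac ⟨nA, wA, hA0, hAn, hAstep, hAint⟩ hst' hnadjst
      obtain ⟨n2, w2, hq1, hq2, hq3, hq4, hq5, hq6, hq7⟩ :=
        minpath A Bc ⟨nB, wB, hB0, hBn, hBstep, hBint⟩ hst' hnadjst
      exact cycle_build A (fun {x y} => hsym) hirr Ac Bc hdisjAB hnadjAB
        hs'Ac hs'Bc ht'Ac ht'Bc hp1 hp2 hp3 hp4 hp5 hp6 hp7 hq1 hq2 hq3 hq4 hq5 hq6 hq7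

theorem dirac (A : N → N → Prop) (hsym : ∀ {x y}, A x y → A y x)
    (hirr : ∀ x, ¬ A x x) (W : Finset N) (hsupp : ∀ x y, A x y → x ∈ W ∧ y ∈ W)
    (hne : W.Nonempty) :
    (∃ m w, Cyc A m w) ∨ (∀ x ∈ W, ∀ y ∈ W, x ≠ y → A x y) ∨
      (∃ u ∈ W, ∃ v ∈ W, u ≠ v ∧ ¬ A u v ∧ Simp A u ∧ Simp A v) :=
  dirac_aux W.card A (fun {x y} => hsym) hirr W hsupp le_rfl hne

lemma ripd_grow {u : N} {h : Finset N} (huh : u ∈ h) :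
    ∀ {E₀ : Finset (Finset N)}, RIPd E₀ → ∀ F, E₀ = insert (h.erase u) F →
      h.erase u ∉ F → h ∉ F → (∀ f ∈ F, u ∉ f) → RIPd (insert h F) := by
  intro E₀ hr
  induction hr with
  | nil =>
    intro F hF _ _ _
    exact absurd hF.symm (Finset.insert_ne_empty _ _)
  | @ins F₀ e hF₀ he hw ih =>
    intro F hFeq hgF hhF huF
    by_cases hge : h.erase u = e
    · have hFF : F = F₀ := by
        have h1 : (insert e F₀).erase e = F₀ := Finset.erase_insert he
        have h2 : (insert (h.erase u) F).erase (h.erase u) = F := Finset.erase_insert hgF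
        rw [← h2, ← hFeq, hge, h1]
      subst hFF
      refine RIPd.ins hF₀ hhF ?_
      rcases hw with h0 | ⟨g', hg', hcond⟩
      · exact Or.inl h0
      · refine Or.inr ⟨g', hg', ?_⟩
        intro x hxh hxU
        have hxu : x ≠ u := by
          rintro rfl
          obtain ⟨f, hf, hxf⟩ := mem_U.mp hxU
          exact huF f hf hxf
        exact hcond x (hge ▸ Finset.mem_erase.mpr ⟨hxu, hxh⟩) hxU
    · have heF : e ∈ F := by
        have hm : e ∈ insert (h.erase u) F := hFeq ▸ Finset.mem_insert_self e F₀
        exact (Finset.mem_insert.mp hm).resolve_left (fun hh => hge hh.symm)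
      have hF₀eq : F₀ = insert (h.erase u) (F.erase e) := by
        have h1 : F₀ = (insert e F₀).erase e := (Finset.erase_insert he).symm
        rw [h1, hFeq, Finset.erase_insert_of_ne hge]
      have hih := ih (F.erase e) hF₀eq (fun hh => hgF (Finset.mem_of_mem_erase hh))
        (fun hh => hhF (Finset.mem_of_mem_erase hh))
        (fun f hf => huF f (Finset.mem_of_mem_erase hf))
      have hue : u ∉ e := huF e heF
      have hne_eh : e ≠ h := fun hh => hue (hh ▸ huh)
      have hgoal : insert e (insert h (F.erase e)) = insert h F := by
        rw [Finset.insert_comm, Finset.insert_erase heF]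
      rw [← hgoal]
      refine RIPd.ins hih ?_ ?_
      · intro hmem
        rcases Finset.mem_insert.mp hmem with hh | hh
        · exact hne_eh hh
        · exact (Finset.notMem_erase e F) hh
      · rcases hw with h0 | ⟨g', hg', hcond⟩
        · exfalso
          rw [h0] at hF₀eq
          exact absurd hF₀eq.symm (Finset.insert_ne_empty _ _)
        · refine Or.inr ?_
          have hg'cases : g' = h.erase u ∨ g' ∈ F.erase e := by
            rw [hF₀eq] at hg'
            exact Finset.mem_insert.mp hg'
          have hUsub : ∀ x ∈ e, x ∈ U (insert h (F.erase e)) → x ∈ U F₀ := by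
            intro x hxe hxU
            have hxu : x ≠ u := fun hh => hue (hh ▸ hxe)
            obtain ⟨f, hf, hxf⟩ := mem_U.mp hxU
            rcases Finset.mem_insert.mp hf with rfl | hf'
            · exact mem_U.mpr ⟨f.erase u, hF₀eq ▸ Finset.mem_insert_self _ _,
                Finset.mem_erase.mpr ⟨hxu, hxf⟩⟩
            · exact mem_U.mpr ⟨f, hF₀eq ▸ Finset.mem_insert.mpr (Or.inr hf'), hxf⟩
          rcases hg'cases with rfl | hg''
          · refine ⟨h, Finset.mem_insert_self _ _, ?_⟩
            intro x hxe hxU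
            exact Finset.mem_of_mem_erase (hcond x hxe (hUsub x hxe hxU))
          · exact ⟨g', Finset.mem_insert.mpr (Or.inr hg''),
              fun x hxe hxU => hcond x hxe (hUsub x hxe hxU)⟩

theorem ripd_of_conf_nocyc : ∀ (n : ℕ) (E : Finset (Finset N)),
    E.sum Finset.card + E.card ≤ n → Conformal E →
    (¬ ∃ m w, Cyc (adj E) m w) → RIPd E := by
  intro n
  induction n with
  | zero =>
    intro E hE _ _
    have hE0 : E = ∅ := by
      rw [← Finset.card_eq_zero]; omega
    exact hE0 ▸ RIPd.nil
  | succ n ih =>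
    intro E hmeas hconf hnocyc
    rcases Finset.eq_empty_or_nonempty E with rfl | hEne
    · exact RIPd.nil
    rcases eq_or_ne E.card 1 with h1 | h1
    · obtain ⟨e, he⟩ := Finset.card_eq_one.mp h1
      subst he
      exact RIPd.ins RIPd.nil (by simp) (Or.inl rfl)
    have hE2 : 2 ≤ E.card := by
      have := Finset.card_pos.mpr hEne; omega
    by_cases hcont : ∃ e ∈ E, ∃ f ∈ E, e ≠ f ∧ e ⊆ f
    · obtain ⟨e, he, f, hf, hef, hsub⟩ := hcont
      set E' := E.erase e with hE'd
      have hms : E'.sum Finset.card + E'.card ≤ n := by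
        have h1 : E'.sum Finset.card + e.card = E.sum Finset.card := Finset.sum_erase_add E _ he
        have h2 : E'.card = E.card - 1 := Finset.card_erase_of_mem he
        omega
      have hadjeq : ∀ x y, adj E' x y ↔ adj E x y := by
        intro x y
        constructor
        · rintro ⟨hne, g, hg, hx1, hx2⟩
          exact ⟨hne, g, Finset.mem_of_mem_erase hg, hx1, hx2⟩
        · rintro ⟨hne, g, hg, hx1, hx2⟩
          rcases eq_or_ne g e with rfl | hge
          · exact ⟨hne, f, Finset.mem_erase.mpr ⟨fun hh => hef hh.symm, hf⟩, hsub hx1, hsub hx2⟩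
          · exact ⟨hne, g, Finset.mem_erase.mpr ⟨hge, hg⟩, hx1, hx2⟩
      have hUsub : ∀ x, x ∈ U E' → x ∈ U E := by
        intro x hx
        obtain ⟨g, hg, hxg⟩ := mem_U.mp hx
        exact mem_U.mpr ⟨g, Finset.mem_of_mem_erase hg, hxg⟩
      have hconf' : Conformal E' := by
        intro K hKV hKcl hKne
        obtain ⟨g, hg, hKg⟩ := hconf K (fun x hx => hUsub x (hKV x hx))
          (fun x hx y hy hxy => (hadjeq x y).mp (hKcl x hx y hy hxy)) hKne
        rcases eq_or_ne g e with rfl | hge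
        · exact ⟨f, Finset.mem_erase.mpr ⟨fun hh => hef hh.symm, hf⟩, hKg.trans hsub⟩
        · exact ⟨g, Finset.mem_erase.mpr ⟨hge, hg⟩, hKg⟩
      have hnc' : ¬ ∃ m w, Cyc (adj E') m w := by
        rintro ⟨m, w, hcyc⟩
        exact hnocyc ⟨m, w, cyc_congr hadjeq hcyc⟩
      have hR' := ih E' hms hconf' hnc'
      have hEeq : E = insert e E' := (Finset.insert_erase he).symm
      rw [hEeq]
      exact RIPd.ins hR' (Finset.notMem_erase e E)
        (Or.inr ⟨f, Finset.mem_erase.mpr ⟨fun hh => hef hh.symm, hf⟩, fun x hx _ => hsub hx⟩)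
    · push_neg at hcont
      have hedge : ∀ e ∈ E, e.Nonempty := by
        intro e he
        rcases Finset.eq_empty_or_nonempty e with rfl | hne'
        · obtain ⟨f, hf, hfe⟩ := Finset.exists_mem_ne (show 1 < E.card by omega) ∅
          exact absurd (Finset.empty_subset f) (hcont ∅ he f hf (Ne.symm hfe))
        · exact hne'
      have hVne : (U E).Nonempty := by
        obtain ⟨e, he⟩ := hEne
        obtain ⟨x, hx⟩ := hedge e he
        exact ⟨x, mem_U.mpr ⟨e, he, hx⟩⟩
      rcases dirac (adj E) (fun {x y} hh => adj_symm hh) (fun x hh => hh.1 rfl) (U E)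
        (by
          intro x y hh
          obtain ⟨hne, g, hg, h1', h2'⟩ := hh
          exact ⟨mem_U.mpr ⟨g, hg, h1'⟩, mem_U.mpr ⟨g, hg, h2'⟩⟩) hVne with
        hcyc | hcomp | hsimp
      · exact absurd hcyc hnocyc
      · exfalso
        obtain ⟨h, hh, hsubV⟩ := hconf (U E) (fun x hx => hx)
          (fun x hx y hy hxy => hcomp x hx y hy hxy) hVne
        obtain ⟨f, hf, hfh⟩ := Finset.exists_mem_ne (show 1 < E.card by omega) h
        exact hcont f hf h hh hfh (fun x hx => hsubV (mem_U.mpr ⟨f, hf, hx⟩))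
      · obtain ⟨u, huV, v, hvV, huv, hnadj, hSu, hSv⟩ := hsimp
        classical
        set K := insert u ((U E).filter (fun x => adj E u x)) with hKd
        have hKV : ∀ x ∈ K, x ∈ U E := by
          intro x hx
          rcases Finset.mem_insert.mp hx with rfl | hx'
          · exact huV
          · exact (Finset.mem_filter.mp hx').1
        have hKcl : ∀ x ∈ K, ∀ y ∈ K, x ≠ y → adj E x y := by
          intro x hx y hy hxy
          rcases Finset.mem_insert.mp hx with rfl | hx' <;>
            rcases Finset.mem_insert.mp hy with rfl | hy'
          · exact absurd rfl hxy
          · exact (Finset.mem_filter.mp hy').2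
          · exact adj_symm (Finset.mem_filter.mp hx').2
          · exact hSu x y (Finset.mem_filter.mp hx').2 (Finset.mem_filter.mp hy').2 hxy
        obtain ⟨h, hhE, hKh⟩ := hconf K hKV hKcl ⟨u, Finset.mem_insert_self _ _⟩
        have huh : u ∈ h := hKh (Finset.mem_insert_self _ _)
        have huniq : ∀ f ∈ E, u ∈ f → f = h := by
          intro f hf huf
          by_contra hne'
          refine hcont f hf h hhE hne' (fun x hxf => ?_)
          rcases eq_or_ne x u with rfl | hxu
          · exact huh
          · exact hKh (Finset.mem_insert.mpr (Or.inr (Finset.mem_filter.mpr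
              ⟨mem_U.mpr ⟨f, hf, hxf⟩, ⟨fun hh => hxu hh.symm, f, hf, huf, hxf⟩⟩)))
        have hnotin : ∀ f ∈ E.erase h, u ∉ f := by
          intro f hf huf
          exact (Finset.mem_erase.mp hf).1 (huniq f (Finset.mem_of_mem_erase hf) huf)
        set E' := insert (h.erase u) (E.erase h) with hE'd
        have hmeas' : E'.sum Finset.card + E'.card ≤ n := by
          have hs1 : (E.erase h).sum Finset.card + h.card = E.sum Finset.card :=
            Finset.sum_erase_add E _ hhE
          have hs2 : E'.sum Finset.card ≤ (E.erase h).sum Finset.card + (h.erase u).card := by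
            by_cases hcol : h.erase u ∈ E.erase h
            · rw [hE'd, Finset.insert_eq_self.mpr hcol]; omega
            · rw [hE'd, Finset.sum_insert hcol]
              exact Nat.le_of_eq (Nat.add_comm _ _)
          have hs3 : (h.erase u).card = h.card - 1 := Finset.card_erase_of_mem huh
          have hs4 : E'.card ≤ (E.erase h).card + 1 := Finset.card_insert_le _ _
          have hs5 : (E.erase h).card = E.card - 1 := Finset.card_erase_of_mem hhE
          have hs6 : 1 ≤ h.card := Finset.card_pos.mpr ⟨u, huh⟩
          omega
        have hadj' : ∀ x y, adj E' x y ↔ (adj E x y ∧ x ≠ u ∧ y ≠ u) := by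
          intro x y
          constructor
          · rintro ⟨hne, f, hf, h1', h2'⟩
            rcases Finset.mem_insert.mp hf with rfl | hf'
            · exact ⟨⟨hne, h, hhE, Finset.mem_of_mem_erase h1', Finset.mem_of_mem_erase h2'⟩,
                (Finset.mem_erase.mp h1').1, (Finset.mem_erase.mp h2').1⟩
            · exact ⟨⟨hne, f, Finset.mem_of_mem_erase hf', h1', h2'⟩,
                fun hh => hnotin f hf' (hh ▸ h1'), fun hh => hnotin f hf' (hh ▸ h2')⟩
          · rintro ⟨⟨hne, f, hf, h1', h2'⟩, hxu, hyu⟩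
            rcases eq_or_ne f h with rfl | hfh
            · exact ⟨hne, f.erase u, Finset.mem_insert_self _ _,
                Finset.mem_erase.mpr ⟨hxu, h1'⟩, Finset.mem_erase.mpr ⟨hyu, h2'⟩⟩
            · exact ⟨hne, f, Finset.mem_insert.mpr (Or.inr (Finset.mem_erase.mpr ⟨hfh, hf⟩)),
                h1', h2'⟩
        have hUE' : ∀ x, x ∈ U E' → x ∈ U E ∧ x ≠ u := by
          intro x hx
          obtain ⟨f, hf, hxf⟩ := mem_U.mp hx
          rcases Finset.mem_insert.mp hf with rfl | hf'
          · exact ⟨mem_U.mpr ⟨h, hhE, Finset.mem_of_mem_erase hxf⟩, (Finset.mem_erase.mp hxf).1⟩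
          · exact ⟨mem_U.mpr ⟨f, Finset.mem_of_mem_erase hf', hxf⟩,
              fun hh => hnotin f hf' (hh ▸ hxf)⟩
        have hconf' : Conformal E' := by
          intro K' hKV' hKcl' hKne'
          obtain ⟨f, hf, hKf⟩ := hconf K' (fun x hx => (hUE' x (hKV' x hx)).1)
            (fun x hx y hy hxy => ((hadj' x y).mp (hKcl' x hx y hy hxy)).1) hKne'
          rcases eq_or_ne f h with rfl | hfh
          · exact ⟨f.erase u, Finset.mem_insert_self _ _,
              fun x hx => Finset.mem_erase.mpr ⟨(hUE' x (hKV' x hx)).2, hKf hx⟩⟩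
          · exact ⟨f, Finset.mem_insert.mpr (Or.inr (Finset.mem_erase.mpr ⟨hfh, hf⟩)), hKf⟩
        have hnc' : ¬ ∃ m w, Cyc (adj E') m w := by
          rintro ⟨m, w, hm1, hm2, hm3, hm4⟩
          refine hnocyc ⟨m, w, hm1, hm2, fun i u1 u2 => ((hadj' _ _).mp (hm3 i u1 u2)).1, ?_⟩
          intro i j u1 u2 u3 u4 hAB
          refine hm4 i j u1 u2 u3 u4 ((hadj' _ _).mpr ⟨hAB, ?_, ?_⟩)
          · exact ((hadj' _ _).mp (hm3 i u1 u2)).2.1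
          · exact ((hadj' _ _).mp (hm3 j u3 u4)).2.1
        have hR' := ih E' hmeas' hconf' hnc'
        by_cases hcol : h.erase u ∈ E.erase h
        · have hE'eq : E' = E.erase h := Finset.insert_eq_self.mpr hcol
          rw [hE'eq] at hR'
          have hEeq : E = insert h (E.erase h) := (Finset.insert_erase hhE).symm
          rw [hEeq]
          refine RIPd.ins hR' (Finset.notMem_erase _ _) (Or.inr ⟨h.erase u, hcol, ?_⟩)
          intro x hxh hxU
          have hxu : x ≠ u := by
            rintro rfl
            obtain ⟨f, hf, hxf⟩ := mem_U.mp hxU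
            exact hnotin f hf hxf
          exact Finset.mem_erase.mpr ⟨hxu, hxh⟩
        · have hgrow := ripd_grow huh hR' (E.erase h) rfl hcol (Finset.notMem_erase _ _) hnotin
          rwa [Finset.insert_erase hhE] at hgrow

theorem stmt2' (E : Finset (Finset N)) :
    AlphaAcyclic E ↔ ¬ ∃ ℓ c, IsSimpleCycle E ℓ c := by
  classical
  constructor
  · intro h
    exact no_cycle_of_ripd (ripd_of_ri h)
  · intro h
    refine ri_of_ripd (ripd_of_conf_nocyc (E.sum Finset.card + E.card) E le_rfl ?_ ?_)
    · by_contra hconf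
      exact h (cycle_of_nonconformal hconf)
    · rintro ⟨m, w, hcyc⟩
      exact h (cycle_of_cyc hcyc)

end SC

theorem stmt2 {N : Type*} [DecidableEq N] (E : Finset (Finset N))
    (hcard : ∀ e ∈ E, 2 ≤ e.card) :
    AlphaAcyclic E ↔ ¬ ∃ ℓ c, IsSimpleCycle E ℓ c :=
  SC.stmt2' E

end BPO
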